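/- arXiv:2105.01025 — 7 statements merged into one kernel-verified Lean document; each statement's English description precedes it below -/
import Mathlib

section
/- Let K_0, …, K_3 and K_{0̂}, …, K_{3̂} be matrices in M_N(ℂ); define the operators k_μ = {K_μ, ·}_{e_μ} and x_μ = {K_{μ̂}, ·}_{e_{μ̂}} on M_N(ℂ), and let D = Σ_μ ( γ^μ ⊗ k_μ + γ^{μ̂} ⊗ x_μ ) acting on ℂ^k ⊗ M_N(ℂ). Then D² = Σ_{μ,ν} η^{μν} 1_k ⊗ (k_μ ∘ k_ν) + (1/2) Σ_{μ,ν} γ^μ γ^ν ⊗ [k_μ, k_ν] − det(η) Σ_μ e_μ 1_k ⊗ (x_μ ∘ x_μ) + Σ_{μ<ν} t_{μν} γ^μ γ^ν ⊗ [x_μ, x_ν] + (1/2) Σ_{μ,ν,σ,α} s_{μνασ} γ^α γ^σ ⊗ {x_ν, k_μ} + Σ_μ (−1)^μ (γ^0 γ^1 γ^2 γ^3) ⊗ [k_μ, x_μ], where s_{μνασ} = e_μ (−1)^μ sgn(ν−μ) sgn(σ−α) δ_{μνασ}, t_{μν} = (−1)^{1+|μ−ν|} Σ_{λ<ρ} δ_{μνλρ}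 e_λ e_ρ, and det(η) = e_0 e_1 e_2 e_3. (Paper: Lemma 3.2, the 'fuzzy Lichnerowicz formula'.) -/
open Matrix

noncomputable section

/-- `δ_{μνασ}`: 1 if the four indices are pairwise distinct, 0 otherwise. -/
def delta4 (μ ν α σ : Fin 4) : ℂ :=
  if μ ≠ ν ∧ μ ≠ α ∧ μ ≠ σ ∧ ν ≠ α ∧ ν ≠ σ ∧ α ≠ σ then 1 else 0

/-- The sign `s_{μνασ} = e_μ (−1)^μ sgn(ν−μ) sgn(σ−α) δ_{μνασ}`. -/
def sSign (e : Fin 4 → ℂ) (μ ν α σ : Fin 4) : ℂ :=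
  e μ * (-1 : ℂ) ^ (μ : ℕ) * (((ν : ℤ) - (μ : ℤ)).sign : ℂ) *
    (((σ : ℤ) - (α : ℤ)).sign : ℂ) * delta4 μ ν α σ

/-- The sign `t_{μν} = (−1)^{1+|μ−ν|} Σ_{λ<ρ} δ_{μνλρ} e_λ e_ρ`. -/
def tSign (e : Fin 4 → ℂ) (μ ν : Fin 4) : ℂ :=
  (-1 : ℂ) ^ (1 + ((μ : ℤ) - (ν : ℤ)).natAbs) *
    ∑ lam : Fin 4, ∑ rho : Fin 4,
      if (lam : ℕ) < (rho : ℕ) then delta4 μ ν lam rho * e lam * e rho else 0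

/-- The operator `g ⊗ T` on `ℂ^k ⊗ M_m(ℂ) ≅ (Fin k → M_m(ℂ))`. -/
def matOp {k : ℕ} {V : Type*} [AddCommGroup V] [Module ℂ V]
    (g : Matrix (Fin k) (Fin k) ℂ) (T : Module.End ℂ V) :
    Module.End ℂ (Fin k → V) where
  toFun f i := ∑ j, g i j • T (f j)
  map_add' f h := by
    funext i
    simp [map_add, smul_add, Finset.sum_add_distrib]
  map_smul' c f := by
    funext i
    simp only [Pi.smul_apply, _root_.map_smul, RingHom.id_apply]
    rw [Finset.smul_sum]
    exact Finset.sum_congr rfl fun j _ => smul_comm _ _ _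

/-- The generalized (anti-)commutator `{M, ·}_e : T ↦ M T + e T M`. -/
def brkt {m : ℕ} (M : Matrix (Fin m) (Fin m) ℂ) (e : ℂ) :
    Module.End ℂ (Matrix (Fin m) (Fin m) ℂ) :=
  LinearMap.mulLeft ℂ M + e • LinearMap.mulRight ℂ M

section Aux
variable {k : ℕ} {V : Type*} [AddCommGroup V] [Module ℂ V]

@[simp] lemma matOp_mul (g g' : Matrix (Fin k) (Fin k) ℂ) (T T' : Module.End ℂ V) :
    matOp g T * matOp g' T' = matOp (g * g') (T * T') := by
  refine LinearMap.ext fun f => funext fun i => ?_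
  simp only [Module.End.mul_apply, matOp, LinearMap.coe_mk, AddHom.coe_mk, Matrix.mul_apply,
    map_sum, _root_.map_smul, Finset.smul_sum, Finset.sum_smul, smul_smul]
  rw [Finset.sum_comm]

@[simp] lemma matOp_smul_left (c : ℂ) (g : Matrix (Fin k) (Fin k) ℂ) (T : Module.End ℂ V) :
    matOp (c • g) T = c • matOp g T := by
  refine LinearMap.ext fun f => funext fun i => ?_
  simp [matOp, Finset.smul_sum, smul_smul]

@[simp] lemma matOp_neg_left (g : Matrix (Fin k) (Fin k) ℂ) (T : Module.End ℂ V) :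
    matOp (-g) T = -matOp g T := by
  refine LinearMap.ext fun f => funext fun i => ?_
  simp [matOp]

@[simp] lemma matOp_add_right (g : Matrix (Fin k) (Fin k) ℂ) (T T' : Module.End ℂ V) :
    matOp g (T + T') = matOp g T + matOp g T' := by
  refine LinearMap.ext fun f => funext fun i => ?_
  simp [matOp, smul_add, Finset.sum_add_distrib]

@[simp] lemma matOp_sub_right (g : Matrix (Fin k) (Fin k) ℂ) (T T' : Module.End ℂ V) :
    matOp g (T - T') = matOp g T - matOp g T' := by
  refine LinearMap.ext fun f => funext fun i => ?_
  simp [matOp, smul_sub, Finset.sum_sub_distrib]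

@[simp] lemma matOp_smul_right (c : ℂ) (g : Matrix (Fin k) (Fin k) ℂ) (T : Module.End ℂ V) :
    matOp g (c • T) = c • matOp g T := by
  refine LinearMap.ext fun f => funext fun i => ?_
  simp [matOp, Finset.smul_sum, smul_smul, mul_comm]

end Aux

set_option maxHeartbeats 4000000 in
theorem stmt3 (p q k N : ℕ) (hpq : p + q = 4) (hk : 1 ≤ k) (hN : 1 ≤ N)
    (e : Fin 4 → ℂ) (he : ∀ μ, e μ = if (μ : ℕ) < p then 1 else -1)
    (γ : Fin 4 → Matrix (Fin k) (Fin k) ℂ)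
    (hCl : ∀ μ ν, γ μ * γ ν + γ ν * γ μ =
      (2 * if μ = ν then e μ else 0) • (1 : Matrix (Fin k) (Fin k) ℂ))
    (hAdj : ∀ μ, (γ μ)ᴴ = e μ • γ μ)
    (γh : Fin 4 → Matrix (Fin k) (Fin k) ℂ)
    (hγh0 : γh 0 = γ 1 * γ 2 * γ 3) (hγh1 : γh 1 = γ 0 * γ 2 * γ 3)
    (hγh2 : γh 2 = γ 0 * γ 1 * γ 3) (hγh3 : γh 3 = γ 0 * γ 1 * γ 2)
    (eh : Fin 4 → ℂ) (heh : ∀ μ, eh μ = (-1 : ℂ) ^ (q + 1) * e μ)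
    (K Kh : Fin 4 → Matrix (Fin N) (Fin N) ℂ)
    (kop xop : Fin 4 → Module.End ℂ (Matrix (Fin N) (Fin N) ℂ))
    (hkop : ∀ μ, kop μ = brkt (K μ) (e μ))
    (hxop : ∀ μ, xop μ = brkt (Kh μ) (eh μ))
    (D : Module.End ℂ (Fin k → Matrix (Fin N) (Fin N) ℂ))
    (hD : D = ∑ μ, (matOp (γ μ) (kop μ) + matOp (γh μ) (xop μ))) :
    D * D =
      (∑ μ, ∑ ν, (if μ = ν then e μ else 0) • matOp 1 (kop μ * kop ν))
      + (1 / 2 : ℂ) • (∑ μ, ∑ ν, matOp (γ μ * γ ν) (kop μ * kop ν - kop ν * kop μ))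
      - (e 0 * e 1 * e 2 * e 3) • (∑ μ, e μ • matOp 1 (xop μ * xop μ))
      + (∑ μ : Fin 4, ∑ ν : Fin 4, if (μ : ℕ) < (ν : ℕ) then
          tSign e μ ν • matOp (γ μ * γ ν) (xop μ * xop ν - xop ν * xop μ) else 0)
      + (1 / 2 : ℂ) • (∑ μ : Fin 4, ∑ ν : Fin 4, ∑ σ : Fin 4, ∑ α : Fin 4,
          sSign e μ ν α σ • matOp (γ α * γ σ) (xop ν * kop μ + kop μ * xop ν))
      + (∑ μ : Fin 4, ((-1 : ℂ) ^ (μ : ℕ)) •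
          matOp (γ 0 * γ 1 * γ 2 * γ 3) (kop μ * xop μ - xop μ * kop μ)) := by
  subst hD
  have hsq : ∀ μ, γ μ * γ μ = e μ • 1 := by
    intro μ
    have h := hCl μ μ
    rw [if_pos rfl] at h
    have h2 : (2:ℂ) • (γ μ * γ μ) = (2:ℂ) • (e μ • (1 : Matrix (Fin k) (Fin k) ℂ)) := by
      rw [two_smul, h, mul_smul]
    exact smul_right_injective _ (by norm_num) h2
  have hsw : ∀ μ ν, μ ≠ ν → γ μ * γ ν = -(γ ν * γ μ) := by
    intro μ ν hne
    have h := hCl μ ν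
    rw [if_neg hne] at h
    simp only [mul_zero, zero_smul] at h
    exact eq_neg_of_add_eq_zero_left h
  have hsq' : ∀ (μ : Fin 4) (X : Matrix (Fin k) (Fin k) ℂ), γ μ * (γ μ * X) = e μ • X := by
    intro μ X
    rw [← mul_assoc, hsq, smul_mul_assoc, one_mul]
  have hsw2 : ∀ (μ ν : Fin 4), (ν:ℕ) < (μ:ℕ) → γ μ * γ ν = -(γ ν * γ μ) := by
    intro μ ν h
    exact hsw μ ν (fun hf => by subst hf; exact lt_irrefl _ h)
  have hsw' : ∀ (μ ν : Fin 4), (ν:ℕ) < (μ:ℕ) →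
      ∀ X : Matrix (Fin k) (Fin k) ℂ, γ μ * (γ ν * X) = -(γ ν * (γ μ * X)) := by
    intro μ ν h X
    rw [← mul_assoc, hsw2 μ ν h, neg_mul, mul_assoc]
  have hv : ∀ μ : Fin 4, e μ = 1 ∨ e μ = -1 := by
    intro μ; rw [he]; split
    · exact Or.inl rfl
    · exact Or.inr rfl
  simp (config := { decide := true }) (disch := decide) only [Fin.sum_univ_four, hγh0, hγh1, hγh2, hγh3,
    mul_add, add_mul, matOp_mul, mul_assoc, hsq, hsq', hsw2, hsw',
    mul_smul_comm, smul_mul_assoc, mul_neg, neg_mul, neg_neg, smul_neg, smul_smul,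
    matOp_smul_left, matOp_neg_left, matOp_add_right, matOp_sub_right, matOp_smul_right,
    sSign, tSign, delta4, reduceIte, zero_smul, smul_zero, zero_add, add_zero, one_smul,
    Fin.isValue, mul_one, one_mul]
  simp only [show ((0:Fin 4):ℤ) = 0 from rfl, show ((1:Fin 4):ℤ) = 1 from rfl,
    show ((2:Fin 4):ℤ) = 2 from rfl, show ((3:Fin 4):ℤ) = 3 from rfl,
    show ((0:Fin 4):ℕ) = 0 from rfl, show ((1:Fin 4):ℕ) = 1 from rfl,
    show ((2:Fin 4):ℕ) = 2 from rfl, show ((3:Fin 4):ℕ) = 3 from rfl]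
  norm_num [show ((1:ℤ)).sign = 1 from by decide, show ((2:ℤ)).sign = 1 from by decide,
    show ((3:ℤ)).sign = 1 from by decide, show ((-1:ℤ)).sign = -1 from by decide,
    show ((-2:ℤ)).sign = -1 from by decide, show ((-3:ℤ)).sign = -1 from by decide,
    show ((0:ℤ)).sign = 0 from by decide]
  match_scalars <;>
    rcases hv 0 with h0|h0 <;> rcases hv 1 with h1|h1 <;>
    rcases hv 2 with h2|h2 <;> rcases hv 3 with h3|h3 <;>
    (try simp only [h0, h1, h2, h3]) <;> ring1
end
end

section
/- Let K_0, …, K_3 ∈ M_N(ℂ) satisfy K_μ* = e_μ K_μ, and let D be the operator on H with D(v⊗Y⊗ψ) = Σ_μ γ^μ v ⊗ (K_μ Y + e_μ Y K_μ) ⊗ ψ. Let ω = Σ_j ρ(W_j⊗a_j) ∘ ( D ∘ ρ(T_j⊗c_j) − ρ(T_j⊗c_j) ∘ D ) be a finite sum with W_j, T_j ∈ M_N(ℂ) and a_j, c_j ∈ M_n(ℂ), and assume ω is self-adjoint. Then there exist matrices 𝖠_0, …, 𝖠_3 ∈ M_{Nn}(ℂ) with 𝖠_μ* = e_μ 𝖠_μ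 such that for all v, Y, ψ: (D + ω + J∘ω∘J^{−1})(v⊗Y⊗ψ) = Σ_μ γ^μ v ⊗ ( (K_μ⊗1_n + 𝖠_μ)(Y⊗ψ) + e_μ (Y⊗ψ)(K_μ⊗1_n + 𝖠_μ) ). (Paper: Lemma 4.3, fluctuations with respect to the K_μ-matrices.) -/
open Matrix
open scoped Kronecker

noncomputable section

/-- The pure tensor `v ⊗ M` in `ℂ^k ⊗ M_{Nn}(ℂ) ≅ (Fin k → M_{Nn}(ℂ))`. -/
def pt {k : ℕ} {ι : Type*} (v : Fin k → ℂ) (M : Matrix ι ι ℂ) :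
    Fin k → Matrix ι ι ℂ :=
  fun i => v i • M

/-- The representation `ρ(P)` acting by left multiplication by `P` on the matrix factor. -/
def rho {k : ℕ} {ι : Type*} [Fintype ι] (P : Matrix ι ι ℂ) :
    Module.End ℂ (Fin k → Matrix ι ι ℂ) :=
  (LinearMap.mulLeft ℂ P).compLeft (Fin k)

/-- The inner product `⟨v⊗Y⊗ψ, w⊗Z⊗χ⟩ = ⟨v,w⟩ Tr(Y*Z) Tr(ψ*χ)` on
`H = ℂ^k ⊗ M_N(ℂ) ⊗ M_n(ℂ) ≅ (Fin k → M_{Nn}(ℂ))`. -/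
def inn {k : ℕ} {ι : Type*} [Fintype ι] (f g : Fin k → Matrix ι ι ℂ) : ℂ :=
  ∑ i, Matrix.trace ((f i)ᴴ * g i)

set_option linter.unusedSectionVars false
section aux
variable {k : ℕ} {ι : Type*} [Fintype ι]

lemma pt_add (v : Fin k → ℂ) (M M' : Matrix ι ι ℂ) :
    pt v (M + M') = pt v M + pt v M' := by
  funext i; simp [pt, smul_add]

lemma pt_smul (v : Fin k → ℂ) (c : ℂ) (M : Matrix ι ι ℂ) :
    pt v (c • M) = c • pt v M := by
  funext i
  show v i • (c • M) = c • (v i • M)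
  rw [smul_comm]

lemma pt_sub (v : Fin k → ℂ) (M M' : Matrix ι ι ℂ) :
    pt v (M - M') = pt v M - pt v M' := by
  funext i; simp [pt, smul_sub]

lemma pt_sum {α : Type*} (s : Finset α) (v : Fin k → ℂ) (M : α → Matrix ι ι ℂ) :
    pt v (∑ j ∈ s, M j) = ∑ j ∈ s, pt v (M j) := by
  funext i; simp [pt, Finset.smul_sum]

lemma rho_pt (P : Matrix ι ι ℂ) (v : Fin k → ℂ) (M : Matrix ι ι ℂ) :
    rho P (pt v M) = pt v (P * M) := by
  funext i
  show P * (v i • M) = v i • (P * M)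
  simp [rho, pt, LinearMap.compLeft, Matrix.mul_smul]

lemma inn_pt (v w : Fin k → ℂ) (M M' : Matrix ι ι ℂ) :
    inn (pt v M) (pt w M') =
      (∑ i, (starRingEnd ℂ) (v i) * w i) * Matrix.trace (Mᴴ * M') := by
  rw [inn, Finset.sum_mul]
  refine Finset.sum_congr rfl fun i _ => ?_
  simp [pt, Matrix.conjTranspose_smul, Matrix.smul_mul, Matrix.mul_smul, Matrix.trace_smul,
    smul_eq_mul]
  ring

lemma inn_sum_left {α : Type*} (s : Finset α) (f : α → (Fin k → Matrix ι ι ℂ))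
    (g : Fin k → Matrix ι ι ℂ) :
    inn (∑ j ∈ s, f j) g = ∑ j ∈ s, inn (f j) g := by
  simp only [inn, Finset.sum_apply, Matrix.conjTranspose_sum, Matrix.sum_mul,
    Matrix.trace_sum]
  exact Finset.sum_comm

lemma inn_sum_right {α : Type*} (s : Finset α) (g : Fin k → Matrix ι ι ℂ)
    (f : α → (Fin k → Matrix ι ι ℂ)) :
    inn g (∑ j ∈ s, f j) = ∑ j ∈ s, inn g (f j) := by
  simp only [inn, Finset.sum_apply, Matrix.mul_sum, Matrix.trace_sum]
  exact Finset.sum_comm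

lemma trace_std_mul {ι : Type*} [Fintype ι] [DecidableEq ι] (s t : ι) (X : Matrix ι ι ℂ) :
    Matrix.trace (Matrix.single t s (1:ℂ) * X) = X s t := by
  simp [Matrix.trace, Matrix.diag, Matrix.mul_apply, Matrix.single, ite_and]

lemma stdBasis_conjT {ι : Type*} [DecidableEq ι] (s t : ι) :
    (Matrix.single s t (1:ℂ))ᴴ = Matrix.single t s (1:ℂ) := by
  ext i j
  simp [Matrix.conjTranspose_apply, Matrix.single, and_comm]

lemma trace_sandwich {ι : Type*} [Fintype ι] [DecidableEq ι] (s t u : ι) (B : Matrix ι ι ℂ) :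
    Matrix.trace ((Matrix.single s t (1:ℂ))ᴴ * (B * Matrix.single u t (1:ℂ))) = B s u := by
  rw [stdBasis_conjT, trace_std_mul, Matrix.mul_apply]
  simp [Matrix.single]

lemma kron_conjT {m m' : Type*} (A : Matrix m m ℂ) (B : Matrix m' m' ℂ) :
    (A ⊗ₖ B)ᴴ = Aᴴ ⊗ₖ Bᴴ := by
  ext ⟨i, i'⟩ ⟨j, j'⟩
  simp [Matrix.conjTranspose_apply, Matrix.kroneckerMap_apply, mul_comm]

lemma kron_std {N n : ℕ} {s₁ t₁ : Fin N} {s₂ t₂ : Fin n} :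
    (Matrix.single s₁ t₁ (1:ℂ)) ⊗ₖ (Matrix.single s₂ t₂ (1:ℂ)) =
      Matrix.single (s₁, s₂) (t₁, t₂) (1:ℂ) := by
  ext ⟨i, i'⟩ ⟨j, j'⟩
  simp [Matrix.single, Matrix.kroneckerMap_apply, ite_and]
  split_ifs <;> simp_all

end aux

theorem stmt4 (p q k N n : ℕ) (hpq : p + q = 4) (hk : 1 ≤ k) (hN : 1 ≤ N) (hn : 1 ≤ n)
    (e : Fin 4 → ℂ) (he : ∀ μ, e μ = if (μ : ℕ) < p then 1 else -1)
    (γ : Fin 4 → Matrix (Fin k) (Fin k) ℂ)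
    (hCl : ∀ μ ν, γ μ * γ ν + γ ν * γ μ =
      (2 * if μ = ν then e μ else 0) • (1 : Matrix (Fin k) (Fin k) ℂ))
    (hAdj : ∀ μ, (γ μ)ᴴ = e μ • γ μ)
    -- the charge conjugation `C`: a conjugate-linear bijection commuting with the γ's
    (C : (Fin k → ℂ) ≃ (Fin k → ℂ))
    (hCadd : ∀ v w, C (v + w) = C v + C w)
    (hCsmul : ∀ (c : ℂ) v, C (c • v) = (starRingEnd ℂ c) • C v)
    (hCγ : ∀ μ v, C ((γ μ).mulVec v) = (γ μ).mulVec (C v))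
    -- the matrices `K_μ` with `K_μ* = e_μ K_μ`
    (K : Fin 4 → Matrix (Fin N) (Fin N) ℂ)
    (hK : ∀ μ, (K μ)ᴴ = e μ • K μ)
    -- the Dirac operator
    (D : Module.End ℂ (Fin k → Matrix (Fin N × Fin n) (Fin N × Fin n) ℂ))
    (hD : ∀ (v : Fin k → ℂ) (Y : Matrix (Fin N) (Fin N) ℂ) (ψ : Matrix (Fin n) (Fin n) ℂ),
      D (pt v (Y ⊗ₖ ψ)) =
        ∑ μ, pt ((γ μ).mulVec v)
          ((K μ ⊗ₖ (1 : Matrix (Fin n) (Fin n) ℂ)) * (Y ⊗ₖ ψ)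
            + e μ • ((Y ⊗ₖ ψ) * (K μ ⊗ₖ (1 : Matrix (Fin n) (Fin n) ℂ)))))
    -- the real structure `J`: a conjugate-linear bijection with `J(v⊗Y⊗ψ) = Cv⊗Y*⊗ψ*`
    (J : (Fin k → Matrix (Fin N × Fin n) (Fin N × Fin n) ℂ) ≃
      (Fin k → Matrix (Fin N × Fin n) (Fin N × Fin n) ℂ))
    (hJadd : ∀ f g, J (f + g) = J f + J g)
    (hJsmul : ∀ (c : ℂ) f, J (c • f) = (starRingEnd ℂ c) • J f)
    (hJ : ∀ (v : Fin k → ℂ) (Y : Matrix (Fin N) (Fin N) ℂ) (ψ : Matrix (Fin n) (Fin n) ℂ),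
      J (pt v (Y ⊗ₖ ψ)) = pt (C v) (Yᴴ ⊗ₖ ψᴴ))
    -- the Connes one-form `ω`, assumed self-adjoint
    (r : ℕ) (W T : Fin r → Matrix (Fin N) (Fin N) ℂ)
    (a c : Fin r → Matrix (Fin n) (Fin n) ℂ)
    (ω : Module.End ℂ (Fin k → Matrix (Fin N × Fin n) (Fin N × Fin n) ℂ))
    (hω : ω = ∑ j, rho (W j ⊗ₖ a j) *
      (D * rho (T j ⊗ₖ c j) - rho (T j ⊗ₖ c j) * D))
    (hsa : ∀ f g, inn (ω f) g = inn f (ω g)) :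
    ∃ A : Fin 4 → Matrix (Fin N × Fin n) (Fin N × Fin n) ℂ,
      (∀ μ, (A μ)ᴴ = e μ • A μ) ∧
      ∀ (v : Fin k → ℂ) (Y : Matrix (Fin N) (Fin N) ℂ) (ψ : Matrix (Fin n) (Fin n) ℂ),
        (D + ω) (pt v (Y ⊗ₖ ψ)) + J (ω (J.symm (pt v (Y ⊗ₖ ψ)))) =
          ∑ μ, pt ((γ μ).mulVec v)
            ((K μ ⊗ₖ (1 : Matrix (Fin n) (Fin n) ℂ) + A μ) * (Y ⊗ₖ ψ)
              + e μ • ((Y ⊗ₖ ψ) * (K μ ⊗ₖ (1 : Matrix (Fin n) (Fin n) ℂ) + A μ))) := by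
  
  classical
  set A : Fin 4 → Matrix (Fin N × Fin n) (Fin N × Fin n) ℂ :=
    fun μ => ∑ j, (W j ⊗ₖ a j) *
      ((K μ ⊗ₖ (1 : Matrix (Fin n) (Fin n) ℂ)) * (T j ⊗ₖ c j)
        - (T j ⊗ₖ c j) * (K μ ⊗ₖ (1 : Matrix (Fin n) (Fin n) ℂ))) with hA
  -- `A μ` as a sum of Kronecker products
  have hAkron : ∀ μ, A μ = ∑ j,
      ((W j * (K μ * T j)) ⊗ₖ (a j * ((1 : Matrix (Fin n) (Fin n) ℂ) * c j))
        - (W j * (T j * K μ)) ⊗ₖ (a j * (c j * (1 : Matrix (Fin n) (Fin n) ℂ)))) := by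
    intro μ
    rw [hA]
    refine Finset.sum_congr rfl fun j _ => ?_
    rw [mul_sub, Matrix.mul_kronecker_mul, Matrix.mul_kronecker_mul,
      Matrix.mul_kronecker_mul, Matrix.mul_kronecker_mul]
  -- step 1: the action of ω on pure tensors
  have hωpt : ∀ (v : Fin k → ℂ) (Y : Matrix (Fin N) (Fin N) ℂ)
      (ψ : Matrix (Fin n) (Fin n) ℂ),
      ω (pt v (Y ⊗ₖ ψ)) = ∑ μ, pt ((γ μ).mulVec v) (A μ * (Y ⊗ₖ ψ)) := by
    intro v Y ψ
    rw [hω, LinearMap.sum_apply]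
    have hterm : ∀ j, ((rho (W j ⊗ₖ a j) *
        (D * rho (T j ⊗ₖ c j) - rho (T j ⊗ₖ c j) * D) :
        Module.End ℂ (Fin k → Matrix (Fin N × Fin n) (Fin N × Fin n) ℂ))) (pt v (Y ⊗ₖ ψ)) =
        ∑ μ, pt ((γ μ).mulVec v)
          (((W j ⊗ₖ a j) *
            ((K μ ⊗ₖ (1 : Matrix (Fin n) (Fin n) ℂ)) * (T j ⊗ₖ c j)
              - (T j ⊗ₖ c j) * (K μ ⊗ₖ (1 : Matrix (Fin n) (Fin n) ℂ)))) * (Y ⊗ₖ ψ)) := by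
      intro j
      have h1 : rho (T j ⊗ₖ c j) (pt v (Y ⊗ₖ ψ)) = pt v ((T j * Y) ⊗ₖ (c j * ψ)) := by
        rw [rho_pt, Matrix.mul_kronecker_mul]
      rw [Module.End.mul_apply, LinearMap.sub_apply, Module.End.mul_apply, Module.End.mul_apply,
        h1, hD, hD, map_sum, map_sub, map_sum]
      simp only [rho_pt]
      rw [map_sum]
      simp only [rho_pt]
      rw [← Finset.sum_sub_distrib]
      refine Finset.sum_congr rfl fun μ _ => ?_
      rw [← pt_sub]
      congr 1
      have e1 : (T j * Y) ⊗ₖ (c j * ψ) = (T j ⊗ₖ c j) * (Y ⊗ₖ ψ) :=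
        Matrix.mul_kronecker_mul _ _ _ _
      rw [e1]
      set P := K μ ⊗ₖ (1 : Matrix (Fin n) (Fin n) ℂ)
      set Q := T j ⊗ₖ c j
      set R := W j ⊗ₖ a j
      set M := Y ⊗ₖ ψ
      simp only [mul_add, mul_sub, sub_mul, mul_smul_comm, mul_assoc]
      abel
    rw [Finset.sum_congr rfl fun j _ => hterm j, Finset.sum_comm]
    refine Finset.sum_congr rfl fun μ _ => ?_
    rw [← pt_sum]
    congr 1
    rw [hA]
    rw [Finset.sum_mul]
  -- step 2: `J ω J⁻¹` acts by right multiplication with `(A μ)ᴴ`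
  have hJsymm : ∀ (v : Fin k → ℂ) (Y : Matrix (Fin N) (Fin N) ℂ)
      (ψ : Matrix (Fin n) (Fin n) ℂ),
      J.symm (pt v (Y ⊗ₖ ψ)) = pt (C.symm v) (Yᴴ ⊗ₖ ψᴴ) := by
    intro v Y ψ
    rw [Equiv.symm_apply_eq, hJ, Equiv.apply_symm_apply, Matrix.conjTranspose_conjTranspose,
      Matrix.conjTranspose_conjTranspose]
  let Jh : (Fin k → Matrix (Fin N × Fin n) (Fin N × Fin n) ℂ) →+
      (Fin k → Matrix (Fin N × Fin n) (Fin N × Fin n) ℂ) := AddMonoidHom.mk' J hJadd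
  have hJfun : ∀ x, J x = Jh x := fun _ => rfl
  have hJω : ∀ (v : Fin k → ℂ) (Y : Matrix (Fin N) (Fin N) ℂ)
      (ψ : Matrix (Fin n) (Fin n) ℂ),
      J (ω (J.symm (pt v (Y ⊗ₖ ψ)))) =
        ∑ μ, pt ((γ μ).mulVec v) ((Y ⊗ₖ ψ) * (A μ)ᴴ) := by
    intro v Y ψ
    rw [hJsymm, hωpt]
    have hexp : ∀ μ : Fin 4, pt ((γ μ).mulVec (C.symm v)) (A μ * (Yᴴ ⊗ₖ ψᴴ)) =
        ∑ j, (pt ((γ μ).mulVec (C.symm v))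
            (((W j * (K μ * T j)) * Yᴴ) ⊗ₖ
              ((a j * ((1 : Matrix (Fin n) (Fin n) ℂ) * c j)) * ψᴴ))
          - pt ((γ μ).mulVec (C.symm v))
            (((W j * (T j * K μ)) * Yᴴ) ⊗ₖ
              ((a j * (c j * (1 : Matrix (Fin n) (Fin n) ℂ))) * ψᴴ))) := by
      intro μ
      rw [hAkron μ, Finset.sum_mul, pt_sum]
      refine Finset.sum_congr rfl fun j _ => ?_
      rw [sub_mul, pt_sub]
      congr 1 <;> exact congrArg _ (Matrix.mul_kronecker_mul _ _ _ _).symm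
    simp only [hexp]
    rw [hJfun, map_sum]
    refine Finset.sum_congr rfl fun μ _ => ?_
    rw [map_sum]
    have hJone : ∀ (B : Matrix (Fin N) (Fin N) ℂ) (b : Matrix (Fin n) (Fin n) ℂ),
        Jh (pt ((γ μ).mulVec (C.symm v)) ((B * Yᴴ) ⊗ₖ (b * ψᴴ))) =
          pt ((γ μ).mulVec v) ((Y ⊗ₖ ψ) * (B ⊗ₖ b)ᴴ) := by
      intro B b
      show J _ = _
      rw [hJ, hCγ, Equiv.apply_symm_apply, Matrix.conjTranspose_mul, Matrix.conjTranspose_mul,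
        Matrix.conjTranspose_conjTranspose, Matrix.conjTranspose_conjTranspose,
        Matrix.mul_kronecker_mul, kron_conjT]
    conv_rhs => rw [hAkron μ, Matrix.conjTranspose_sum, Finset.mul_sum, pt_sum]
    refine Finset.sum_congr rfl fun j _ => ?_
    rw [map_sub, hJone, hJone, Matrix.conjTranspose_sub, mul_sub, pt_sub]
  -- basic facts about e
  have he2 : ∀ μ, e μ * e μ = 1 := by
    intro μ; rw [he]; split_ifs <;> ring
  have he0 : ∀ μ, e μ ≠ 0 := by
    intro μ; rw [he]; split_ifs <;> simp
  -- traces of products of gamma matrices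
  have htr : ∀ μ ν, Matrix.trace (γ μ * γ ν) = (if μ = ν then e μ else 0) * (k : ℂ) := by
    intro μ ν
    have h := congrArg Matrix.trace (hCl μ ν)
    rw [Matrix.trace_add, Matrix.trace_mul_comm (γ ν) (γ μ), Matrix.trace_smul,
      Matrix.trace_one] at h
    have hcard : (Fintype.card (Fin k) : ℂ) = (k : ℂ) := by simp
    rw [smul_eq_mul, hcard] at h
    have h2 : (2 : ℂ) * Matrix.trace (γ μ * γ ν) =
        2 * ((if μ = ν then e μ else 0) * (k : ℂ)) := by
      rw [two_mul]; rw [h]; ring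
    have := mul_left_cancel₀ (two_ne_zero (α := ℂ)) h2
    exact this
  -- vanishing criterion from linear independence of the gamma matrices
  have ht0 : ∀ t : Fin 4 → ℂ, (∀ i i', ∑ μ, γ μ i i' * t μ = 0) → ∀ ν, t ν = 0 := by
    intro t h ν
    have hmat : (∑ μ, t μ • γ μ) = 0 := by
      ext i i'
      simpa [Matrix.sum_apply, mul_comm] using h i i'
    have h2 := congrArg (fun X => Matrix.trace (X * γ ν)) hmat
    simp only [Finset.sum_mul, Matrix.smul_mul, Matrix.zero_mul, Matrix.trace_sum,
      Matrix.trace_smul, Matrix.trace_zero, smul_eq_mul] at h2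
    rw [Finset.sum_congr rfl (fun μ _ => by rw [htr μ ν])] at h2
    have h3 : t ν * (e ν * (k : ℂ)) = 0 := by
      rw [← h2]
      rw [Finset.sum_eq_single ν]
      · simp [mul_assoc]
      · intro b _ hb; simp [hb]
      · intro hb; simp at hb
    have hk0 : (k : ℂ) ≠ 0 := Nat.cast_ne_zero.mpr (by omega)
    rcases mul_eq_zero.mp h3 with h4 | h4
    · exact h4
    · exact absurd h4 (mul_ne_zero (he0 ν) hk0)
  -- conjugation identity for the gamma matrices and the standard basis vectors
  have hip : ∀ (μ : Fin 4) (i i' : Fin k),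
      (starRingEnd ℂ) (γ μ i i') = e μ * γ μ i' i := by
    intro μ i i'
    have := congrFun (congrFun (hAdj μ) i') i
    simpa [Matrix.conjTranspose_apply, Matrix.smul_apply, smul_eq_mul] using this
  -- the self-adjointness of ω forces the reality condition on A
  have hAconj : ∀ μ, (A μ)ᴴ = e μ • A μ := by
    intro μ
    -- first show `e μ • (A μ)ᴴ - A μ = 0`
    have hB : e μ • (A μ)ᴴ - A μ = 0 := by
      -- the scalar coefficients vanish
      have key : ∀ (M M' : Matrix (Fin N × Fin n) (Fin N × Fin n) ℂ),
          (∀ (Y Y' : Matrix (Fin N) (Fin N) ℂ) (ψ ψ' : Matrix (Fin n) (Fin n) ℂ),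
            M = Y ⊗ₖ ψ → M' = Y' ⊗ₖ ψ' → True) → True := fun _ _ _ => trivial
      have hvan : ∀ (Y Y' : Matrix (Fin N) (Fin N) ℂ) (ψ ψ' : Matrix (Fin n) (Fin n) ℂ),
          Matrix.trace ((Y ⊗ₖ ψ)ᴴ * ((e μ • (A μ)ᴴ - A μ) * (Y' ⊗ₖ ψ'))) = 0 := by
        intro Y Y' ψ ψ'
        set M := Y ⊗ₖ ψ
        set M' := Y' ⊗ₖ ψ'
        -- from self-adjointness evaluated at basis vectors
        have hsab : ∀ i i' : Fin k,
            ∑ ν, γ ν i i' * Matrix.trace (Mᴴ * ((e ν • (A ν)ᴴ - A ν) * M')) = 0 := by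
          intro i i'
          have h := hsa (pt (Pi.single i 1) M) (pt (Pi.single i' 1) M')
          rw [hωpt, hωpt, inn_sum_left, inn_sum_right] at h
          simp only [inn_pt] at h
          -- compute the vector pairings
          have hL : ∀ ν, (∑ s, (starRingEnd ℂ) (((γ ν).mulVec (Pi.single i 1)) s) *
              (Pi.single i' 1 : Fin k → ℂ) s) = e ν * γ ν i i' := by
            intro ν
            rw [Finset.sum_eq_single i']
            · simp [Matrix.mulVec_single, hip]
            · intro b _ hb; simp [Pi.single_eq_of_ne hb]
            · intro hb; simp at hb
          have hR : ∀ ν, (∑ s, (starRingEnd ℂ) ((Pi.single i 1 : Fin k → ℂ) s) *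
              ((γ ν).mulVec (Pi.single i' 1)) s) = γ ν i i' := by
            intro ν
            rw [Finset.sum_eq_single i]
            · simp [Matrix.mulVec_single]
            · intro b _ hb; simp [Pi.single_eq_of_ne hb]
            · intro hb; simp at hb
          simp only [hL, hR] at h
          -- rearrange
          have : ∑ ν, γ ν i i' * Matrix.trace (Mᴴ * ((e ν • (A ν)ᴴ - A ν) * M')) =
              (∑ ν, e ν * γ ν i i' * Matrix.trace ((A ν * M)ᴴ * M')) -
              (∑ ν, γ ν i i' * Matrix.trace (Mᴴ * (A ν * M'))) := by
            rw [← Finset.sum_sub_distrib]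
            refine Finset.sum_congr rfl fun ν _ => ?_
            rw [Matrix.conjTranspose_mul, Matrix.mul_assoc, Matrix.sub_mul, Matrix.smul_mul,
              Matrix.mul_sub, Matrix.trace_sub, Matrix.mul_smul, Matrix.trace_smul]
            simp only [smul_eq_mul]
            ring
          rw [this, h, sub_self]
        exact ht0 (fun ν => Matrix.trace (Mᴴ * ((e ν • (A ν)ᴴ - A ν) * M'))) hsab μ
      ext su uu
      obtain ⟨s1, s2⟩ := su
      obtain ⟨u1, u2⟩ := uu
      have h := hvan (Matrix.single s1 ⟨0, hN⟩ 1) (Matrix.single u1 ⟨0, hN⟩ 1)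
        (Matrix.single s2 ⟨0, hn⟩ 1) (Matrix.single u2 ⟨0, hn⟩ 1)
      rw [kron_std, kron_std, trace_sandwich] at h
      simpa using h
    have h1 : e μ • (A μ)ᴴ = A μ := sub_eq_zero.mp hB
    calc (A μ)ᴴ = (e μ * e μ) • (A μ)ᴴ := by rw [he2, one_smul]
      _ = e μ • A μ := by rw [← smul_smul, h1]
  refine ⟨A, hAconj, fun v Y ψ => ?_⟩
  rw [LinearMap.add_apply, hD, hωpt, hJω]
  simp only [← Finset.sum_add_distrib]
  refine Finset.sum_congr rfl fun μ _ => ?_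
  rw [← pt_add, ← pt_add]
  refine congrArg _ ?_
  rw [hAconj μ]
  simp only [add_mul, mul_add, smul_add, mul_smul_comm]
  abel
end
end

section
/- Let n₁ > n₂ ≥ 2 be integers, and let G ⊆ U(n₁n₂) be the subgroup consisting of all Kronecker products u₁ ⊗ u₂ with u₁ ∈ U(n₁) and u₂ ∈ U(n₂). Then the quotient of G by its subgroup of unitary scalar multiples of the identity, G / { λ·1_{n₁n₂} : λ ∈ ℂ, |λ| = 1 }, is isomorphic as a group to PU(n₁) × PU(n₂). (Paper: Proposition 4.5, the gauge group of a gauge matrix spectral triple is PU(n₁) × PU(n₂).) -/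
open Matrix
open scoped Kronecker

noncomputable section

lemma conjTranspose_kron {m n : Type*} (A : Matrix m m ℂ) (B : Matrix n n ℂ) :
    (A ⊗ₖ B)ᴴ = Aᴴ ⊗ₖ Bᴴ := by
  ext ⟨i, j⟩ ⟨k, l⟩
  simp [Matrix.conjTranspose_apply, star_mul']

lemma kron_mem_unitary {n₁ n₂ : ℕ}
    {u₁ : Matrix (Fin n₁) (Fin n₁) ℂ} {u₂ : Matrix (Fin n₂) (Fin n₂) ℂ}
    (h₁ : u₁ ∈ Matrix.unitaryGroup (Fin n₁) ℂ) (h₂ : u₂ ∈ Matrix.unitaryGroup (Fin n₂) ℂ) :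
    u₁ ⊗ₖ u₂ ∈ Matrix.unitaryGroup (Fin n₁ × Fin n₂) ℂ := by
  rw [Matrix.mem_unitaryGroup_iff']
  rw [Matrix.mem_unitaryGroup_iff'] at h₁ h₂
  calc star (u₁ ⊗ₖ u₂) * (u₁ ⊗ₖ u₂)
      = (u₁ᴴ ⊗ₖ u₂ᴴ) * (u₁ ⊗ₖ u₂) := by
        rw [Matrix.star_eq_conjTranspose, conjTranspose_kron]
    _ = (u₁ᴴ * u₁) ⊗ₖ (u₂ᴴ * u₂) := (Matrix.mul_kronecker_mul _ _ _ _).symm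
    _ = 1 := by
        rw [← Matrix.star_eq_conjTranspose, ← Matrix.star_eq_conjTranspose, h₁, h₂,
          Matrix.one_kronecker_one]

/-- The homomorphism `U(n₁) × U(n₂) → U(n₁n₂)`, `(u₁, u₂) ↦ u₁ ⊗ₖ u₂`. -/
def kronHom (n₁ n₂ : ℕ) :
    Matrix.unitaryGroup (Fin n₁) ℂ × Matrix.unitaryGroup (Fin n₂) ℂ →*
      Matrix.unitaryGroup (Fin n₁ × Fin n₂) ℂ where
  toFun u := ⟨(u.1 : Matrix (Fin n₁) (Fin n₁) ℂ) ⊗ₖ (u.2 : Matrix (Fin n₂) (Fin n₂) ℂ),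
    kron_mem_unitary u.1.2 u.2.2⟩
  map_one' := by
    apply Subtype.ext
    show ((1 : Matrix.unitaryGroup (Fin n₁) ℂ) : Matrix (Fin n₁) (Fin n₁) ℂ) ⊗ₖ
        ((1 : Matrix.unitaryGroup (Fin n₂) ℂ) : Matrix (Fin n₂) (Fin n₂) ℂ) =
      ((1 : Matrix.unitaryGroup (Fin n₁ × Fin n₂) ℂ) :
        Matrix (Fin n₁ × Fin n₂) (Fin n₁ × Fin n₂) ℂ)
    rw [OneMemClass.coe_one, OneMemClass.coe_one, OneMemClass.coe_one,
      Matrix.one_kronecker_one]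
  map_mul' u v := by
    apply Subtype.ext
    show ((u.1 * v.1 : Matrix.unitaryGroup (Fin n₁) ℂ) : Matrix (Fin n₁) (Fin n₁) ℂ) ⊗ₖ
        ((u.2 * v.2 : Matrix.unitaryGroup (Fin n₂) ℂ) : Matrix (Fin n₂) (Fin n₂) ℂ) = _
    rw [MulMemClass.coe_mul, MulMemClass.coe_mul, Matrix.mul_kronecker_mul]
    rfl

/-- The subgroup of unitary scalar multiples of the identity. -/
def scalars (ι : Type*) [DecidableEq ι] [Fintype ι] :
    Subgroup (Matrix.unitaryGroup ι ℂ) where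
  carrier := {g | ∃ lam : ℂ, ‖lam‖ = 1 ∧ (g : Matrix ι ι ℂ) = lam • 1}
  one_mem' := ⟨1, by simp⟩
  mul_mem' := by
    rintro a b ⟨l, hl, ha⟩ ⟨m, hm, hb⟩
    refine ⟨l * m, by simp [hl, hm], ?_⟩
    push_cast
    rw [ha, hb, smul_mul_smul_comm, one_mul]
  inv_mem' := by
    rintro a ⟨l, hl, ha⟩
    refine ⟨starRingEnd ℂ l, by simpa using hl, ?_⟩
    have : ((a⁻¹ : Matrix.unitaryGroup ι ℂ) : Matrix ι ι ℂ) = star (a : Matrix ι ι ℂ) := rfl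
    rw [this, ha, star_smul, star_one]
    rfl

instance scalars_normal (ι : Type*) [DecidableEq ι] [Fintype ι] : (scalars ι).Normal := by
  constructor
  rintro x ⟨l, hl, hx⟩ g
  refine ⟨l, hl, ?_⟩
  have hg : ((g⁻¹ : Matrix.unitaryGroup ι ℂ) : Matrix ι ι ℂ) = star (g : Matrix ι ι ℂ) := rfl
  push_cast
  rw [hx, hg, Matrix.mul_smul, Matrix.mul_one, Matrix.smul_mul]
  congr 1
  exact (Unitary.mem_iff.mp g.2).2

/-- The projective unitary group `PU(n) = U(n)/U(1)`. -/
def PU (n : ℕ) := Matrix.unitaryGroup (Fin n) ℂ ⧸ scalars (Fin n)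

instance (n : ℕ) : Group (PU n) := QuotientGroup.Quotient.group _


lemma matrix_ne_zero_of_unitary {n : ℕ} (hn : 0 < n) {u : Matrix (Fin n) (Fin n) ℂ}
    (h : u ∈ Matrix.unitaryGroup (Fin n) ℂ) : u ≠ 0 := by
  intro h0
  have h' := (Matrix.mem_unitaryGroup_iff'.mp h)
  rw [h0] at h'
  have := congrFun (congrFun h' ⟨0, hn⟩) ⟨0, hn⟩
  simp at this

lemma scalar_of_kron {n₁ n₂ : ℕ} (hn₁ : 0 < n₁) (hn₂ : 0 < n₂)
    {u₁ : Matrix (Fin n₁) (Fin n₁) ℂ} {u₂ : Matrix (Fin n₂) (Fin n₂) ℂ}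
    (h₁ : u₁ ∈ Matrix.unitaryGroup (Fin n₁) ℂ) (h₂ : u₂ ∈ Matrix.unitaryGroup (Fin n₂) ℂ)
    {lam : ℂ} (h : u₁ ⊗ₖ u₂ = lam • (1 : Matrix (Fin n₁ × Fin n₂) (Fin n₁ × Fin n₂) ℂ)) :
    (∃ a : ℂ, u₁ = a • 1) ∧ (∃ b : ℂ, u₂ = b • 1) := by
  have key : ∀ i k j l, u₁ i k * u₂ j l =
      lam * (if i = k ∧ j = l then 1 else 0) := by
    intro i k j l
    have := congrFun (congrFun h (i, j)) (k, l)
    simpa [Matrix.kroneckerMap_apply, Matrix.one_apply, Prod.ext_iff, mul_ite] using this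
  obtain ⟨j₀, l₀, hne₂⟩ : ∃ j l, u₂ j l ≠ 0 := by
    by_contra hc
    push_neg at hc
    exact matrix_ne_zero_of_unitary hn₂ h₂ (by ext j l; exact hc j l)
  obtain ⟨i₀, k₀, hne₁⟩ : ∃ i k, u₁ i k ≠ 0 := by
    by_contra hc
    push_neg at hc
    exact matrix_ne_zero_of_unitary hn₁ h₁ (by ext i k; exact hc i k)
  have hjl : j₀ = l₀ := by
    by_contra hjl
    have := key i₀ k₀ j₀ l₀
    simp [hjl] at this
    rcases this with h' | h'
    · exact hne₁ h'
    · exact hne₂ h'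
  subst hjl
  have hik : i₀ = k₀ := by
    by_contra hik
    have := key i₀ k₀ j₀ j₀
    simp [hik] at this
    rcases this with h' | h'
    · exact hne₁ h'
    · exact hne₂ h'
  subst hik
  constructor
  · refine ⟨lam / u₂ j₀ j₀, ?_⟩
    ext i k
    have := key i k j₀ j₀
    simp only [and_true] at this
    rw [Matrix.smul_apply, Matrix.one_apply]
    rcases eq_or_ne i k with rfl | hik
    · simp only [if_pos rfl, smul_eq_mul, mul_one]
      rw [if_pos rfl, mul_one] at this
      field_simp
      linear_combination (norm := (simp only [if_true, mul_one]; ring)) this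
    · simp only [if_neg hik, smul_eq_mul, mul_zero]
      simp [hik] at this
      rcases this with h' | h'
      · exact h'
      · exact absurd h' hne₂
  · refine ⟨lam / u₁ i₀ i₀, ?_⟩
    ext j l
    have := key i₀ i₀ j l
    simp only [true_and] at this
    rw [Matrix.smul_apply, Matrix.one_apply]
    rcases eq_or_ne j l with rfl | hjl
    · simp only [if_pos rfl, smul_eq_mul, mul_one]
      rw [if_pos rfl, mul_one] at this
      field_simp
      linear_combination (norm := (simp only [if_true, mul_one]; ring)) this
    · simp only [if_neg hjl, smul_eq_mul, mul_zero]
      simp [hjl] at this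
      rcases this with h' | h'
      · exact absurd h' hne₁
      · exact h'

lemma abs_of_scalar_unitary {n : ℕ} (hn : 0 < n) {u : Matrix (Fin n) (Fin n) ℂ}
    (h : u ∈ Matrix.unitaryGroup (Fin n) ℂ) {a : ℂ} (ha : u = a • 1) :
    ‖a‖ = 1 := by
  have h' := Matrix.mem_unitaryGroup_iff'.mp h
  rw [ha] at h'
  have := congrFun (congrFun h' ⟨0, hn⟩) ⟨0, hn⟩
  simp [Matrix.mul_apply, Matrix.one_apply, Finset.sum_ite_eq, Matrix.smul_apply] at this
  have hsq : (Complex.normSq a : ℂ) = 1 := by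
    rw [← Complex.mul_conj]
    rw [mul_comm]
    linear_combination this
  have : Complex.normSq a = 1 := by exact_mod_cast hsq
  rw [Complex.norm_def, this, Real.sqrt_one]

theorem stmt9 (n₁ n₂ : ℕ) (h₂ : 2 ≤ n₂) (h₁₂ : n₂ < n₁) :
    Nonempty
      ((↥(kronHom n₁ n₂).range ⧸
          (scalars (Fin n₁ × Fin n₂)).comap (kronHom n₁ n₂).range.subtype) ≃*
        (PU n₁ × PU n₂)) := by
  have hn₂ : 0 < n₂ := by omega
  have hn₁ : 0 < n₁ := by omega
  set φ := (QuotientGroup.mk' ((scalars (Fin n₁ × Fin n₂)).comap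
      (kronHom n₁ n₂).range.subtype)).comp (kronHom n₁ n₂).rangeRestrict with hφdef
  have hφsurj : Function.Surjective φ :=
    (QuotientGroup.mk'_surjective _).comp (kronHom n₁ n₂).rangeRestrict_surjective
  set ψ := (QuotientGroup.mk' (scalars (Fin n₁))).prodMap
      (QuotientGroup.mk' (scalars (Fin n₂))) with hψdef
  have hψsurj : Function.Surjective ψ :=
    Function.Surjective.prodMap (QuotientGroup.mk'_surjective _) (QuotientGroup.mk'_surjective _)
  have hker : φ.ker = ψ.ker := by
    ext u
    obtain ⟨u₁, u₂⟩ := u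
    constructor
    · intro hu
      rw [MonoidHom.mem_ker, hφdef, MonoidHom.comp_apply, QuotientGroup.mk'_apply,
        QuotientGroup.eq_one_iff, Subgroup.mem_comap] at hu
      obtain ⟨lam, hlam, heq⟩ := hu
      have heq' : (u₁ : Matrix (Fin n₁) (Fin n₁) ℂ) ⊗ₖ (u₂ : Matrix (Fin n₂) (Fin n₂) ℂ)
          = lam • 1 := heq
      obtain ⟨⟨a, ha⟩, ⟨b, hb⟩⟩ := scalar_of_kron hn₁ hn₂ u₁.2 u₂.2 heq'
      rw [MonoidHom.mem_ker, hψdef, MonoidHom.coe_prodMap, Prod.map_apply, Prod.mk_eq_one,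
        QuotientGroup.mk'_apply, QuotientGroup.mk'_apply,
        QuotientGroup.eq_one_iff, QuotientGroup.eq_one_iff]
      exact ⟨⟨a, abs_of_scalar_unitary hn₁ u₁.2 ha, ha⟩,
        ⟨b, abs_of_scalar_unitary hn₂ u₂.2 hb, hb⟩⟩
    · intro hu
      rw [MonoidHom.mem_ker, hψdef, MonoidHom.coe_prodMap, Prod.map_apply, Prod.mk_eq_one,
        QuotientGroup.mk'_apply, QuotientGroup.mk'_apply,
        QuotientGroup.eq_one_iff, QuotientGroup.eq_one_iff] at hu
      obtain ⟨⟨a, ha, ha'⟩, ⟨b, hb, hb'⟩⟩ := hu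
      rw [MonoidHom.mem_ker, hφdef, MonoidHom.comp_apply, QuotientGroup.mk'_apply,
        QuotientGroup.eq_one_iff, Subgroup.mem_comap]
      refine ⟨a * b, by simp [ha, hb], ?_⟩
      show (u₁ : Matrix (Fin n₁) (Fin n₁) ℂ) ⊗ₖ (u₂ : Matrix (Fin n₂) (Fin n₂) ℂ)
          = (a * b) • 1
      rw [ha', hb', Matrix.smul_kronecker, Matrix.kronecker_smul,
        Matrix.one_kronecker_one, smul_smul]
  exact ⟨(QuotientGroup.quotientKerEquivOfSurjective φ hφsurj).symm.trans
    ((QuotientGroup.quotientMulEquivOfEq hker).trans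
      (QuotientGroup.quotientKerEquivOfSurjective ψ hψsurj))⟩
end
end

section
/- Let n₁, n₂ ≥ 1. (i) If g₁ ∈ GL(n₁, ℂ) and g₂ ∈ GL(n₂, ℂ) are such that the Kronecker product g₁ ⊗ g₂ is unitary, then there exist a real number ρ > 0 and unitary matrices u₁ ∈ U(n₁), u₂ ∈ U(n₂) with g₁ = ρ u₁ and g₂ = ρ^{−1} u₂. (ii) If ρ₁, ρ₂ > 0 with ρ₁ρ₂ = 1 and u₁ ∈ U(n₁), u₂ ∈ U(n₂) satisfy (ρ₁u₁) ⊗ (ρ₂u₂) = 1_{n₁n₂}, then there exists θ ∈ ℝ with u₁ = e^{iθ}·1_{n₁} and u₂ = e^{−iθ}·1_{n₂} (and consequently ρ₂ = ρ₁^{−1}). (Paper: Lemma 4.7 on the short exact sequence 1 → ℂ× → {ℝ⁺×U(n₁)} ×_{|det|} {ℝ⁺×U(n₂)} → 𝒰(A₁⊗A₂) → 1.) -/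
open Matrix
open scoped Kronecker

noncomputable section

lemma star_kron {n₁ n₂ : ℕ} (A : Matrix (Fin n₁) (Fin n₁) ℂ)
    (B : Matrix (Fin n₂) (Fin n₂) ℂ) :
    star (A ⊗ₖ B) = star A ⊗ₖ star B := by
  ext ⟨i, j⟩ ⟨k, l⟩
  simp [Matrix.star_apply, Matrix.kroneckerMap_apply, Matrix.conjTranspose_apply, _root_.map_mul]

lemma kron_eq_one_aux {n₁ n₂ : ℕ} (h₁ : 1 ≤ n₁) (h₂ : 1 ≤ n₂)
    {A : Matrix (Fin n₁) (Fin n₁) ℂ} {B : Matrix (Fin n₂) (Fin n₂) ℂ}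
    (h : A ⊗ₖ B = 1) :
    ∃ c : ℂ, c ≠ 0 ∧ A = c • 1 ∧ B = c⁻¹ • 1 := by
  have hent : ∀ (i k : Fin n₁) (j l : Fin n₂),
      A i k * B j l = if i = k ∧ j = l then 1 else 0 := by
    intro i k j l
    have h' := congrFun (congrFun h (i, j)) (k, l)
    simpa [Matrix.kroneckerMap_apply, Matrix.one_apply, Prod.ext_iff] using h'
  set i₀ : Fin n₁ := ⟨0, h₁⟩
  set j₀ : Fin n₂ := ⟨0, h₂⟩
  have hc : A i₀ i₀ * B j₀ j₀ = 1 := by simpa using hent i₀ i₀ j₀ j₀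
  have ha0 : A i₀ i₀ ≠ 0 := left_ne_zero_of_mul_eq_one hc
  have hb0 : B j₀ j₀ ≠ 0 := right_ne_zero_of_mul_eq_one hc
  refine ⟨A i₀ i₀, ha0, ?_, ?_⟩
  · ext i k
    by_cases hik : i = k
    · subst hik
      have h1 : A i i * B j₀ j₀ = 1 := by simpa using hent i i j₀ j₀
      have : A i i * B j₀ j₀ = A i₀ i₀ * B j₀ j₀ := by rw [hc, h1]
      have := mul_right_cancel₀ hb0 this
      simp [Matrix.one_apply, this]
    · have h1 : A i k * B j₀ j₀ = 0 := by simpa [hik] using hent i k j₀ j₀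
      have : A i k = 0 := by
        rcases mul_eq_zero.mp h1 with h' | h'
        · exact h'
        · exact absurd h' hb0
      simp [Matrix.one_apply, hik, this]
  · ext j l
    by_cases hjl : j = l
    · subst hjl
      have h1 : A i₀ i₀ * B j j = 1 := by simpa using hent i₀ i₀ j j
      have : B j j = (A i₀ i₀)⁻¹ :=
        mul_left_cancel₀ ha0 (by rw [h1, mul_inv_cancel₀ ha0])
      simp [Matrix.one_apply, this]
    · have h1 : A i₀ i₀ * B j l = 0 := by simpa [hjl] using hent i₀ i₀ j l
      have : B j l = 0 := by
        rcases mul_eq_zero.mp h1 with h' | h'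
        · exact absurd h' ha0
        · exact h'
      simp [Matrix.one_apply, hjl, this]

theorem stmt11 (n₁ n₂ : ℕ) (h₁ : 1 ≤ n₁) (h₂ : 1 ≤ n₂) :
    (∀ (g₁ : Matrix (Fin n₁) (Fin n₁) ℂ) (g₂ : Matrix (Fin n₂) (Fin n₂) ℂ),
      IsUnit g₁ → IsUnit g₂ →
      g₁ ⊗ₖ g₂ ∈ Matrix.unitaryGroup (Fin n₁ × Fin n₂) ℂ →
      ∃ ρ : ℝ, 0 < ρ ∧
        ∃ u₁ ∈ Matrix.unitaryGroup (Fin n₁) ℂ, ∃ u₂ ∈ Matrix.unitaryGroup (Fin n₂) ℂ,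
          g₁ = (ρ : ℂ) • u₁ ∧ g₂ = ((ρ : ℂ))⁻¹ • u₂)
    ∧ (∀ (ρ₁ ρ₂ : ℝ), 0 < ρ₁ → 0 < ρ₂ → ρ₁ * ρ₂ = 1 →
        ∀ u₁ ∈ Matrix.unitaryGroup (Fin n₁) ℂ, ∀ u₂ ∈ Matrix.unitaryGroup (Fin n₂) ℂ,
          ((ρ₁ : ℂ) • u₁) ⊗ₖ ((ρ₂ : ℂ) • u₂) = 1 →
          (∃ θ : ℝ, u₁ = Complex.exp (θ * Complex.I) • 1 ∧
              u₂ = Complex.exp (-(θ * Complex.I)) • 1) ∧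
            ρ₂ = ρ₁⁻¹) := by
  constructor
  · intro g₁ g₂ hg₁ hg₂ hU
    have hU' : star (g₁ ⊗ₖ g₂) * (g₁ ⊗ₖ g₂) = 1 :=
      Matrix.mem_unitaryGroup_iff'.mp hU
    have hkron : (star g₁ * g₁) ⊗ₖ (star g₂ * g₂) = 1 := by
      rw [Matrix.mul_kronecker_mul, ← star_kron]; exact hU'
    obtain ⟨c, hc0, hA, hB⟩ := kron_eq_one_aux h₁ h₂ hkron
    set i₀ : Fin n₁ := ⟨0, h₁⟩
    -- c is a positive real
    have hcval : c = (star g₁ * g₁) i₀ i₀ := by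
      rw [hA]; simp [Matrix.one_apply]
    have hcreal : c = ((∑ k, Complex.normSq (g₁ k i₀) : ℝ) : ℂ) := by
      rw [hcval]
      simp [Matrix.mul_apply, Matrix.conjTranspose_apply, Complex.normSq_eq_conj_mul_self]
    set r : ℝ := ∑ k, Complex.normSq (g₁ k i₀) with hr
    have hrne : r ≠ 0 := by
      intro h
      apply hc0
      rw [hcreal, h]; simp
    have hr0 : 0 < r :=
      lt_of_le_of_ne (Finset.sum_nonneg (fun k _ => Complex.normSq_nonneg (g₁ k i₀)))
        (Ne.symm hrne)
    refine ⟨Real.sqrt r, Real.sqrt_pos.mpr hr0, ((Real.sqrt r : ℂ))⁻¹ • g₁, ?_,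
      (Real.sqrt r : ℂ) • g₂, ?_, ?_, ?_⟩
    · rw [Matrix.mem_unitaryGroup_iff']
      have hsq : ((Real.sqrt r : ℂ)) * ((Real.sqrt r : ℂ)) = c := by
        rw [hcreal]
        norm_cast
        exact Real.mul_self_sqrt hr0.le
      have hs0 : ((Real.sqrt r : ℂ)) ≠ 0 := by
        simp [Complex.ofReal_eq_zero, Real.sqrt_eq_zero', not_le, hr0, ne_of_gt]
      rw [star_smul, Matrix.mul_smul, Matrix.smul_mul, hA, smul_smul, smul_smul]
      rw [show (star ((Real.sqrt r : ℂ))⁻¹ : ℂ) = ((Real.sqrt r : ℂ))⁻¹ by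
        simp [star_inv₀, Complex.star_def, Complex.conj_ofReal]]
      have hkey : ((Real.sqrt r : ℂ))⁻¹ * ((Real.sqrt r : ℂ))⁻¹ * c = 1 := by
        rw [← hsq]; field_simp
      rw [hkey]; simp
    · rw [Matrix.mem_unitaryGroup_iff']
      have hsq : ((Real.sqrt r : ℂ)) * ((Real.sqrt r : ℂ)) = c := by
        rw [hcreal]
        norm_cast
        exact Real.mul_self_sqrt hr0.le
      rw [star_smul, Matrix.mul_smul, Matrix.smul_mul, hB, smul_smul, smul_smul]
      rw [show (star ((Real.sqrt r : ℂ)) : ℂ) = ((Real.sqrt r : ℂ)) by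
        simp [Complex.star_def, Complex.conj_ofReal]]
      have hs0 : ((Real.sqrt r : ℂ)) ≠ 0 := by
        simp [Complex.ofReal_eq_zero, Real.sqrt_eq_zero', not_le, hr0, ne_of_gt]
      have hkey : ((Real.sqrt r : ℂ)) * ((Real.sqrt r : ℂ)) * c⁻¹ = 1 := by
        rw [← hsq]; field_simp
      rw [hkey]; simp
    · have hs0 : ((Real.sqrt r : ℂ)) ≠ 0 := by
        simp [Complex.ofReal_eq_zero, Real.sqrt_eq_zero', not_le, hr0, ne_of_gt]
      rw [smul_smul]; simp [mul_inv_cancel₀ hs0]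
    · have hs0 : ((Real.sqrt r : ℂ)) ≠ 0 := by
        simp [Complex.ofReal_eq_zero, Real.sqrt_eq_zero', not_le, hr0, ne_of_gt]
      rw [smul_smul]; simp [inv_mul_cancel₀ hs0]
  · intro ρ₁ ρ₂ hρ₁ hρ₂ hρ u₁ hu₁ u₂ hu₂ hkron
    have hone : u₁ ⊗ₖ u₂ = 1 := by
      have h' : ((ρ₁ : ℂ) * (ρ₂ : ℂ)) • (u₁ ⊗ₖ u₂) = 1 := by
        rw [← hkron, Matrix.smul_kronecker, Matrix.kronecker_smul, smul_smul]
      have : ((ρ₁ : ℂ) * (ρ₂ : ℂ)) = 1 := by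
        exact_mod_cast hρ
      rwa [this, one_smul] at h'
    obtain ⟨c, hc0, hA, hB⟩ := kron_eq_one_aux h₁ h₂ hone
    set i₀ : Fin n₁ := ⟨0, h₁⟩
    have hu1 : star u₁ * u₁ = 1 := Matrix.mem_unitaryGroup_iff'.mp hu₁
    have habs : ‖c‖ = 1 := by
      rw [hA] at hu1
      have h' := congrFun (congrFun hu1 i₀) i₀
      simp only [star_smul, Matrix.mul_smul, Matrix.smul_mul, smul_smul] at h'
      have h'' : c * (starRingEnd ℂ) c = 1 := by
        simpa [Matrix.one_apply, Matrix.smul_apply, Matrix.mul_apply,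
          Matrix.conjTranspose_apply, mul_comm] using h'
      rw [Complex.mul_conj] at h''
      have hn : Complex.normSq c = 1 := by exact_mod_cast h''
      rw [← Complex.sq_norm] at hn
      nlinarith [norm_nonneg c]
    have hcexp : c = Complex.exp ((Complex.arg c : ℂ) * Complex.I) := by
      conv_lhs => rw [← Complex.norm_mul_exp_arg_mul_I c]
      rw [habs]; simp
    constructor
    · refine ⟨Complex.arg c, ?_, ?_⟩
      · rw [hA]; conv_lhs => rw [hcexp]
      · rw [hB, Complex.exp_neg, ← hcexp]
    · field_simp
      linarith [hρ]
end
end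

section
/- Let n₁, n₂ ≥ 2. (i) If u₁ ∈ U(n₁) and u₂ ∈ U(n₂) satisfy det(u₁)^{n₂}·det(u₂)^{n₁} = 1 and u₁ ⊗ u₂ = 1_{n₁n₂}, then there exists λ ∈ ℂ with |λ| = 1, u₁ = λ·1_{n₁} and u₂ = λ^{−1}·1_{n₂}. (ii) If g₁ ∈ GL(n₁, ℂ) and g₂ ∈ GL(n₂, ℂ) are such that g₁ ⊗ g₂ is unitary and det(g₁)^{n₂}·det(g₂)^{n₁} = 1, then there exist unitaries u₁ ∈ U(n₁) and u₂ ∈ U(n₂) with det(u₁)^{n₂}·det(u₂)^{n₁} = 1 and g₁ ⊗ g₂ = u₁ ⊗ u₂. (Paper: Lemma 5.2 on the short exact sequence 1 → U(1) → U(n₁) ×_{det} U(n₂) → 𝒮𝒰(A₁⊗A₂) → 1.) -/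
open Matrix
open scoped Kronecker

noncomputable section

lemma kron_one_aux {n₁ n₂ : ℕ} (h₁ : 0 < n₁) (h₂ : 0 < n₂)
    (A : Matrix (Fin n₁) (Fin n₁) ℂ) (B : Matrix (Fin n₂) (Fin n₂) ℂ)
    (h : A ⊗ₖ B = 1) :
    ∃ lam : ℂ, lam ≠ 0 ∧ A = lam • 1 ∧ B = lam⁻¹ • 1 := by
  set i0 : Fin n₁ := ⟨0, h₁⟩
  set j0 : Fin n₂ := ⟨0, h₂⟩
  have key : ∀ i k j l, A i k * B j l = if i = k ∧ j = l then 1 else 0 := by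
    intro i k j l
    have := congrFun (congrFun h (i, j)) (k, l)
    simpa [Matrix.kroneckerMap_apply, Matrix.one_apply, Prod.ext_iff] using this
  have h00 : A i0 i0 * B j0 j0 = 1 := by simpa using key i0 i0 j0 j0
  have hA0 : A i0 i0 ≠ 0 := left_ne_zero_of_mul_eq_one h00
  have hB0 : B j0 j0 ≠ 0 := right_ne_zero_of_mul_eq_one h00
  refine ⟨A i0 i0, hA0, ?_, ?_⟩
  · ext i k
    have hk := key i k j0 j0
    by_cases hik : i = k
    · rw [if_pos ⟨hik, rfl⟩] at hk
      subst hik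
      simp only [Matrix.smul_apply, Matrix.one_apply_eq, smul_eq_mul, mul_one]
      have : A i i * B j0 j0 = A i0 i0 * B j0 j0 := by rw [h00, hk]
      exact mul_right_cancel₀ hB0 this
    · rw [if_neg (by tauto)] at hk
      have : A i k = 0 := by
        rcases mul_eq_zero.mp hk with h' | h'
        · exact h'
        · exact absurd h' hB0
      simp [Matrix.one_apply, hik, this]
  · ext j l
    have hk := key i0 i0 j l
    by_cases hjl : j = l
    · rw [if_pos ⟨rfl, hjl⟩] at hk
      subst hjl
      have : B j j = (A i0 i0)⁻¹ := eq_inv_of_mul_eq_one_right hk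
      simp [Matrix.one_apply, this]
    · rw [if_neg (by tauto)] at hk
      have : B j l = 0 := by
        rcases mul_eq_zero.mp hk with h' | h'
        · exact absurd h' hA0
        · exact h'
      simp [Matrix.one_apply, hjl, this]

theorem stmt12 (n₁ n₂ : ℕ) (h₁ : 2 ≤ n₁) (h₂ : 2 ≤ n₂) :
    (∀ u₁ ∈ Matrix.unitaryGroup (Fin n₁) ℂ, ∀ u₂ ∈ Matrix.unitaryGroup (Fin n₂) ℂ,
      u₁.det ^ n₂ * u₂.det ^ n₁ = 1 → u₁ ⊗ₖ u₂ = 1 →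
      ∃ lam : ℂ, ‖lam‖ = 1 ∧ u₁ = lam • 1 ∧ u₂ = lam⁻¹ • 1)
    ∧ (∀ (g₁ : Matrix (Fin n₁) (Fin n₁) ℂ) (g₂ : Matrix (Fin n₂) (Fin n₂) ℂ),
        IsUnit g₁ → IsUnit g₂ →
        g₁ ⊗ₖ g₂ ∈ Matrix.unitaryGroup (Fin n₁ × Fin n₂) ℂ →
        g₁.det ^ n₂ * g₂.det ^ n₁ = 1 →
        ∃ u₁ ∈ Matrix.unitaryGroup (Fin n₁) ℂ, ∃ u₂ ∈ Matrix.unitaryGroup (Fin n₂) ℂ,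
          u₁.det ^ n₂ * u₂.det ^ n₁ = 1 ∧ g₁ ⊗ₖ g₂ = u₁ ⊗ₖ u₂) := by
  have h₁' : 0 < n₁ := by omega
  have h₂' : 0 < n₂ := by omega
  constructor
  · intro u₁ hu₁ u₂ _ _ hk
    obtain ⟨lam, hlam, hA, hB⟩ := kron_one_aux h₁' h₂' u₁ u₂ hk
    refine ⟨lam, ?_, hA, hB⟩
    have hmem : star u₁ * u₁ = 1 := (Matrix.mem_unitaryGroup_iff').mp hu₁
    rw [hA] at hmem
    have hmem2 : (lam * starRingEnd ℂ lam) • (1 : Matrix (Fin n₁) (Fin n₁) ℂ) = 1 := by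
      simpa [star_smul, smul_smul] using hmem
    have h1 := congrFun (congrFun hmem2 ⟨0, h₁'⟩) ⟨0, h₁'⟩
    simp [Matrix.one_apply] at h1
    have hns : Complex.normSq lam = 1 := by
      have h2 : lam * starRingEnd ℂ lam = 1 := h1
      rw [Complex.mul_conj] at h2
      exact_mod_cast h2
    have hsq : ‖lam‖ ^ 2 = 1 := by rw [Complex.sq_norm]; exact hns
    have habs := norm_nonneg lam
    nlinarith [hsq]
  · intro g₁ g₂ hg₁ hg₂ hu hdet
    have hmul : g₁ ⊗ₖ g₂ * star (g₁ ⊗ₖ g₂) = 1 := (Matrix.mem_unitaryGroup_iff).mp hu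
    have hkron : (g₁ * star g₁) ⊗ₖ (g₂ * star g₂) = 1 := by
      rw [Matrix.mul_kronecker_mul, ← star_kron, hmul]
    obtain ⟨lam, hlam, hA, hB⟩ := kron_one_aux h₁' h₂' _ _ hkron
    set i0 : Fin n₁ := ⟨0, h₁'⟩
    have hlam_eq : lam = (g₁ * star g₁) i0 i0 := by
      have := congrFun (congrFun hA i0) i0
      simpa [Matrix.one_apply] using this.symm
    have hlam_real : lam = (∑ k, Complex.normSq (g₁ i0 k) : ℝ) := by
      rw [hlam_eq, Matrix.mul_apply]
      push_cast
      refine Finset.sum_congr rfl fun k _ => ?_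
      rw [Matrix.star_apply, Complex.star_def, Complex.mul_conj]
    set t : ℝ := ∑ k, Complex.normSq (g₁ i0 k) with ht
    have ht_nonneg : 0 ≤ t := Finset.sum_nonneg fun k _ => Complex.normSq_nonneg _
    have ht_ne : (t : ℂ) ≠ 0 := by rw [← hlam_real]; exact hlam
    have ht_pos : 0 < t := lt_of_le_of_ne ht_nonneg (by
      intro h; apply ht_ne; rw [← h]; norm_num)
    set s : ℝ := Real.sqrt t with hs
    have hs_pos : 0 < s := Real.sqrt_pos.mpr ht_pos
    have hs_sq : (s : ℝ) * s = t := Real.mul_self_sqrt ht_nonneg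
    have hs_ne : (s : ℂ) ≠ 0 := by exact_mod_cast hs_pos.ne'
    have hstar_inv : star (((s : ℂ))⁻¹) = ((s : ℂ))⁻¹ := by
      simp [Complex.star_def, map_inv₀, Complex.conj_ofReal]
    have hstar_s : star ((s : ℂ)) = (s : ℂ) := by
      simp [Complex.star_def, Complex.conj_ofReal]
    have hts : (t : ℂ) = (s : ℂ) * (s : ℂ) := by
      rw [← hs_sq]; push_cast; ring
    refine ⟨((s : ℂ))⁻¹ • g₁, ?_, (s : ℂ) • g₂, ?_, ?_, ?_⟩
    · rw [Matrix.mem_unitaryGroup_iff, star_smul, smul_mul_assoc, mul_smul_comm, hA,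
        hstar_inv, hlam_real, smul_smul, smul_smul, hts]
      rw [show ((s:ℂ))⁻¹ * ((s:ℂ))⁻¹ * ((s:ℂ) * (s:ℂ)) = 1 by field_simp, one_smul]
    · rw [Matrix.mem_unitaryGroup_iff, star_smul, smul_mul_assoc, mul_smul_comm, hB,
        hstar_s, hlam_real, smul_smul, smul_smul, hts]
      rw [show (s:ℂ) * (s:ℂ) * ((s:ℂ) * (s:ℂ))⁻¹ = 1 by field_simp, one_smul]
    · rw [Matrix.det_smul, Matrix.det_smul]
      simp only [Fintype.card_fin, mul_pow, ← pow_mul, inv_pow, Nat.mul_comm n₂ n₁]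
      rw [show ((s:ℂ)^(n₁*n₂))⁻¹ * g₁.det^n₂ * ((s:ℂ)^(n₁*n₂) * g₂.det^n₁)
          = (((s:ℂ)^(n₁*n₂))⁻¹ * (s:ℂ)^(n₁*n₂)) * (g₁.det^n₂ * g₂.det^n₁) by ring,
        inv_mul_cancel₀ (pow_ne_zero _ hs_ne), hdet, one_mul]
    · rw [Matrix.smul_kronecker, Matrix.kronecker_smul, smul_smul,
        inv_mul_cancel₀ hs_ne, one_smul]
end
end

section
/- Let n₁, n₂ ≥ 2 and let ξ : U(1) × SU(n₁) × SU(n₂) → U(n₁) × U(n₂) be the group homomorphism ξ(z, m₁, m₂) = (z·m₁, z^{−1}·m₂). Then: (i) ξ(z, m₁, m₂) = (1_{n₁}, 1_{n₂}) if and only if z^{gcd(n₁,n₂)} = 1, m₁ = z^{−1}·1_{n₁} and m₂ = z·1_{n₂}; hence the kernel of ξ is the image of the group μ_{gcd(n₁,n₂)} of gcd(n₁,n₂)-th roots of unity under the injective homomorphism λ ↦ (λ, λ^{−1}·1_{n₁}, λ·1_{n₂}). (ii) A pair (u₁, u₂) ∈ U(n₁) × U(n₂) with det(u₁)^{n₂}·det(u₂)^{n₁}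 = 1 lies in the image of ξ if and only if there exists λ ∈ ℂ with |λ| = 1, det(u₁) = λ^{n₁} and det(u₂) = λ^{−n₂}. (Paper: Lemma 5.3 on the exact sequence 1 → μ_{gcd(n₁,n₂)} → U(1)×SU(n₁)×SU(n₂) → U(n₁)×_{det}U(n₂) → μ_{n₁n₂} → 1.) -/
open Matrix

noncomputable section

lemma smul_mem_unitary_aux {n : ℕ} (z : ℂ) (hz : ‖z‖ = 1)
    {m : Matrix (Fin n) (Fin n) ℂ} (hm : m ∈ Matrix.unitaryGroup (Fin n) ℂ) :
    z • m ∈ Matrix.unitaryGroup (Fin n) ℂ := by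
  rw [Matrix.mem_unitaryGroup_iff] at hm ⊢
  rw [star_smul, smul_mul_smul, hm, Complex.star_def, Complex.mul_conj]
  have : Complex.normSq z = 1 := by
    have := Complex.sq_norm z
    rw [hz] at this; simpa using this.symm
  rw [this]; simp

theorem stmt13 (n₁ n₂ : ℕ) (h₁ : 2 ≤ n₁) (h₂ : 2 ≤ n₂) :
    -- (i) characterization of the kernel of ξ(z, m₁, m₂) = (z m₁, z⁻¹ m₂)
    (∀ (z : ℂ) (m₁ : Matrix (Fin n₁) (Fin n₁) ℂ) (m₂ : Matrix (Fin n₂) (Fin n₂) ℂ),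
      ‖z‖ = 1 →
      m₁ ∈ Matrix.unitaryGroup (Fin n₁) ℂ → m₁.det = 1 →
      m₂ ∈ Matrix.unitaryGroup (Fin n₂) ℂ → m₂.det = 1 →
      ((z • m₁ = 1 ∧ z⁻¹ • m₂ = 1) ↔
        (z ^ Nat.gcd n₁ n₂ = 1 ∧ m₁ = z⁻¹ • 1 ∧ m₂ = z • 1)))
    -- the map λ ↦ (λ, λ⁻¹·1, λ·1) is injective on the gcd-th roots of unity
    ∧ (∀ lam lam' : ℂ, lam ^ Nat.gcd n₁ n₂ = 1 → lam' ^ Nat.gcd n₁ n₂ = 1 →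
        (lam, lam⁻¹ • (1 : Matrix (Fin n₁) (Fin n₁) ℂ),
            lam • (1 : Matrix (Fin n₂) (Fin n₂) ℂ)) =
          (lam', lam'⁻¹ • 1, lam' • 1) →
        lam = lam')
    -- (ii) characterization of the image of ξ among pairs in U(n₁) ×_det U(n₂)
    ∧ (∀ u₁ ∈ Matrix.unitaryGroup (Fin n₁) ℂ, ∀ u₂ ∈ Matrix.unitaryGroup (Fin n₂) ℂ,
        u₁.det ^ n₂ * u₂.det ^ n₁ = 1 →
        ((∃ (z : ℂ) (m₁ : Matrix (Fin n₁) (Fin n₁) ℂ) (m₂ : Matrix (Fin n₂) (Fin n₂) ℂ),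
            ‖z‖ = 1 ∧
            m₁ ∈ Matrix.unitaryGroup (Fin n₁) ℂ ∧ m₁.det = 1 ∧
            m₂ ∈ Matrix.unitaryGroup (Fin n₂) ℂ ∧ m₂.det = 1 ∧
            u₁ = z • m₁ ∧ u₂ = z⁻¹ • m₂) ↔
          (∃ lam : ℂ, ‖lam‖ = 1 ∧
            u₁.det = lam ^ (n₁ : ℤ) ∧ u₂.det = lam ^ (-(n₂ : ℤ))))) := by
  refine ⟨?_, ?_, ?_⟩
  · intro z m₁ m₂ hz hu₁ hd₁ hu₂ hd₂
    have hz0 : z ≠ 0 := by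
      intro h; rw [h] at hz; simp at hz
    constructor
    · rintro ⟨e₁, e₂⟩
      have hn1 : z ^ n₁ = 1 := by
        have := congrArg Matrix.det e₁
        rwa [Matrix.det_smul, hd₁, mul_one, Matrix.det_one, Fintype.card_fin] at this
      have hn2 : z ^ n₂ = 1 := by
        have := congrArg Matrix.det e₂
        rw [Matrix.det_smul, hd₂, mul_one, Matrix.det_one, Fintype.card_fin] at this
        have : (z ^ n₂)⁻¹ = 1 := by rw [← inv_pow]; exact this
        simpa [inv_eq_one] using this
      refine ⟨pow_gcd_eq_one.mpr ⟨hn1, hn2⟩, ?_, ?_⟩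
      · rw [← e₁, smul_smul, inv_mul_cancel₀ hz0, one_smul]
      · rw [← e₂, smul_smul, mul_inv_cancel₀ hz0, one_smul]
    · rintro ⟨_, rfl, rfl⟩
      constructor
      · rw [smul_smul, mul_inv_cancel₀ hz0, one_smul]
      · rw [smul_smul, inv_mul_cancel₀ hz0, one_smul]
  · intro lam lam' _ _ h
    exact congrArg Prod.fst h
  · intro u₁ hu₁ u₂ hu₂ hdet
    constructor
    · rintro ⟨z, m₁, m₂, hz, _, hd₁, _, hd₂, rfl, rfl⟩
      have hz0 : z ≠ 0 := by intro h; rw [h] at hz; simp at hz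
      refine ⟨z, hz, ?_, ?_⟩
      · rw [Matrix.det_smul, hd₁, mul_one, Fintype.card_fin, zpow_natCast]
      · rw [Matrix.det_smul, hd₂, mul_one, Fintype.card_fin, inv_pow,
          _root_.zpow_neg, zpow_natCast]
    · rintro ⟨lam, hl, hd₁, hd₂⟩
      have hl0 : lam ≠ 0 := by intro h; rw [h] at hl; simp at hl
      have hlinv : ‖lam⁻¹‖ = 1 := by rw [norm_inv, hl]; norm_num
      refine ⟨lam, lam⁻¹ • u₁, lam • u₂, hl,
        smul_mem_unitary_aux _ hlinv hu₁, ?_,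
        smul_mem_unitary_aux _ hl hu₂, ?_, ?_, ?_⟩
      · rw [Matrix.det_smul, hd₁, Fintype.card_fin, inv_pow, zpow_natCast,
          inv_mul_cancel₀ (pow_ne_zero _ hl0)]
      · rw [Matrix.det_smul, hd₂, Fintype.card_fin, _root_.zpow_neg, zpow_natCast,
          mul_inv_cancel₀ (pow_ne_zero _ hl0)]
      · rw [smul_smul, mul_inv_cancel₀ hl0, one_smul]
      · rw [smul_smul, inv_mul_cancel₀ hl0, one_smul]
end
end

section
/- Let m ≥ 1, let L_0, …, L_3 and A_0, …, A_3 be matrices in M_m(ℂ), and let u ∈ U(m). Define the gauge-transformed potentials A^u_μ = u A_μ u* + u (L_μ u* − u* L_μ) and the field strength matrices 𝖥_{μν}(A) = [L_μ + A_μ, L_ν + A_ν] (matrix commutator). Then for all μ, ν ∈ {0,1,2,3}: 𝖥_{μν}(A^u) = u · 𝖥_{μν}(A) · u*, i.e. the field strength matrix transforms by conjugation (by the adjoint action Ad_u) under gauge transformations. (Paper: Proposition 6.3, gauge covariance of the field strength.) -/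
open Matrix

noncomputable section

/-- Field strength matrix `𝖥_{μν}(A) = [L_μ + A_μ, L_ν + A_ν]`. -/
def fieldStrengthMatrix {m : ℕ} (L A : Fin 4 → Matrix (Fin m) (Fin m) ℂ) (μ ν : Fin 4) :
    Matrix (Fin m) (Fin m) ℂ :=
  (L μ + A μ) * (L ν + A ν) - (L ν + A ν) * (L μ + A μ)

theorem stmt16 (m : ℕ) (hm : 1 ≤ m)
    (L A : Fin 4 → Matrix (Fin m) (Fin m) ℂ)
    (u : Matrix (Fin m) (Fin m) ℂ) (hu : u ∈ Matrix.unitaryGroup (Fin m) ℂ)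
    (Au : Fin 4 → Matrix (Fin m) (Fin m) ℂ)
    (hAu : ∀ μ, Au μ = u * A μ * star u + u * (L μ * star u - star u * L μ)) :
    ∀ μ ν : Fin 4,
      fieldStrengthMatrix L Au μ ν = u * fieldStrengthMatrix L A μ ν * star u := by
  have h1 : u * star u = 1 := hu.2
  have h2 : star u * u = 1 := hu.1
  have key : ∀ μ, L μ + Au μ = u * (L μ + A μ) * star u := by
    intro μ
    rw [hAu μ]
    have : u * (L μ * star u - star u * L μ)
        = u * L μ * star u - (u * star u) * L μ := by noncomm_ring
    rw [this, h1]
    noncomm_ring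
  intro μ ν
  unfold fieldStrengthMatrix
  rw [key μ, key ν]
  have e : ∀ X Y : Matrix (Fin m) (Fin m) ℂ,
      (u * X * star u) * (u * Y * star u) = u * (X * Y) * star u := by
    intro X Y
    calc (u * X * star u) * (u * Y * star u) = u * X * (star u * u) * Y * star u := by
          noncomm_ring
      _ = u * (X * Y) * star u := by rw [h2]; noncomm_ring
  rw [e, e]
  noncomm_ring
end
end
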